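/- arXiv:math/0208081 — 2 statements merged into one kernel-verified Lean document; each statement's English description precedes it below -/
import Mathlib

section
/- Let A be a G-Frobenius algebra over k and α a normalized 2-cocycle on G with values in kˣ; set ε(g,h) := α(g,h)·α(g*h*g⁻¹,g)⁻¹. Form the G-Frobenius tensor product A ⊗̂ k^α[G], whose underlying graded space is ⊕_{g∈G} (A_g ⊗ (k^α[G])_g) with componentwise multiplication (a⊗x)(b⊗y) = (a·b)⊗(x·y), unit 1⊗ê, form η⊗η', diagonal G-action φ⊗φ', and product character. Then the map a ⊗ ĝ ↦ a (for a ∈ A_g) is an isomorphism of G-Frobenius algebras from A ⊗̂ k^α[G] to the twist s(α,ε)(A) = (G, A, ∘^α, 1, η^α, φ^ε, χ), where a ∘^α b = α(g,h)·(a∘b) for a ∈ A_g, b ∈ A_h, η^α(a,b) = α(g,g⁻¹)·η(a,b) for a ∈ A_g, b ∈ A_{g⁻¹}, and φ^ε_g(a) = ε(g,h)·φ_g(a) for a ∈ A_h. Here an isomorphism of G-Frobenius algebras is a grading-preserving k-linear bijection that intertwines multiplications, units, bilinear forms, G-actions, and characters. -/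
/-- A `G`-Frobenius algebra over a field `k` of characteristic zero (Kaufmann):
a finite-dimensional `G`-graded `k`-vector space `A = ⊕_g A_g` (the grading given by
submodules together with the projections onto them), with an associative bilinear
multiplication respecting the grading, unit `1 ∈ A_e`, a nondegenerate graded invariant
bilinear form `η`, a `G`-action `φ` by algebra automorphisms with
`φ_g(A_h) ⊆ A_{g h g⁻¹}`, and a character `χ : G → kˣ`, satisfying twisted
commutativity, projective self-invariance, projective invariance of the metric and the
projective trace axiom. -/
structure GFrobeniusAlgebra (G : Type) [Group G] [Fintype G]
    (k : Type) [Field k] [CharZero k]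
    (A : Type) [AddCommGroup A] [Module k A] : Type where
  grading : G → Submodule k A
  proj : G → A →ₗ[k] A
  proj_mem : ∀ (g : G) (a : A), proj g a ∈ grading g
  proj_of_mem : ∀ (g : G), ∀ a ∈ grading g, proj g a = a
  proj_of_ne : ∀ (g h : G), g ≠ h → ∀ a ∈ grading g, proj h a = 0
  sum_proj : ∀ a : A, (∑ g : G, proj g a) = a
  finiteDim : FiniteDimensional k A
  mul : A →ₗ[k] A →ₗ[k] A
  mul_assoc' : ∀ a b c : A, mul (mul a b) c = mul a (mul b c)
  one : A
  one_mem : one ∈ grading 1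
  one_mul' : ∀ a : A, mul one a = a
  mul_one' : ∀ a : A, mul a one = a
  mul_mem : ∀ (g h : G), ∀ a ∈ grading g, ∀ b ∈ grading h, mul a b ∈ grading (g * h)
  η : A →ₗ[k] A →ₗ[k] k
  η_nondeg : ∀ a : A, (∀ b : A, η a b = 0) → a = 0
  η_graded : ∀ (g h : G), g * h ≠ 1 → ∀ a ∈ grading g, ∀ b ∈ grading h, η a b = 0
  η_invariant : ∀ a b c : A, η a (mul b c) = η (mul a b) c
  φ : G → A →ₗ[k] A
  φ_one : φ 1 = LinearMap.id
  φ_mul : ∀ g h : G, φ (g * h) = φ g ∘ₗ φ h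
  φ_algebra : ∀ (g : G) (a b : A), φ g (mul a b) = mul (φ g a) (φ g b)
  φ_unit : ∀ g : G, φ g one = one
  φ_grading : ∀ (g h : G), ∀ a ∈ grading h, φ g a ∈ grading (g * h * g⁻¹)
  χ : G →* kˣ
  twisted_comm : ∀ (g : G), ∀ a ∈ grading g, ∀ b : A, mul a b = mul (φ g b) a
  self_invariance : ∀ (g : G), ∀ a ∈ grading g, φ g a = (((χ g)⁻¹ : kˣ) : k) • a
  metric_invariance : ∀ (g : G) (a b : A),
    η (φ g a) (φ g b) = ((((χ g)⁻¹ : kˣ) : k)) ^ 2 * η a b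
  trace_axiom : ∀ (g h : G), ∀ c ∈ grading (g * h * g⁻¹ * h⁻¹),
    ((χ h : kˣ) : k) * LinearMap.trace k A (proj g ∘ₗ mul c ∘ₗ φ h ∘ₗ proj g)
      = ((χ g⁻¹ : kˣ) : k) * LinearMap.trace k A (proj h ∘ₗ φ g⁻¹ ∘ₗ mul c ∘ₗ proj h)

/-- The multiplication of the twisted group ring `k^α[G]` on `G →₀ k`
(basis `ĝ = Finsupp.single g 1`), determined bilinearly by `ĝ · ĥ = α(g,h) • (g*h)^`. -/
noncomputable def twistedMul {G : Type} [Group G] {k : Type} [Field k]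
    (α : G → G → kˣ) (f₁ f₂ : G →₀ k) : G →₀ k :=
  f₁.sum fun x a => f₂.sum fun y b => Finsupp.single (x * y) (a * b * (α x y : k))

/-- The linear map `A ⊗ k[G] → A` sending `a ⊗ ĝ ↦ proj_g(a)`; on the Frobenius tensor
product `A ⊗̂ k^α[G] = ⊕_g A_g ⊗ k·ĝ ⊆ A ⊗ k[G]` it is the map `a ⊗ ĝ ↦ a` (for
`a ∈ A_g`). -/
noncomputable def Phi {G : Type} [Group G] [Fintype G] {k : Type} [Field k] [CharZero k]
    {A : Type} [AddCommGroup A] [Module k A] (F : GFrobeniusAlgebra G k A) :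
    TensorProduct k A (G →₀ k) →ₗ[k] A :=
  TensorProduct.lift
    (LinearMap.flip
      (Finsupp.lsum k fun g => LinearMap.toSpanSingleton k (A →ₗ[k] A) (F.proj g)))

/-- The underlying subspace of the Frobenius tensor product `A ⊗̂ k^α[G]`, namely
`⊕_g A_g ⊗ k·ĝ ⊆ A ⊗ k[G]`. -/
noncomputable def hatTensor {G : Type} [Group G] [Fintype G] {k : Type} [Field k]
    [CharZero k] {A : Type} [AddCommGroup A] [Module k A] (F : GFrobeniusAlgebra G k A) :
    Submodule k (TensorProduct k A (G →₀ k)) :=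
  Submodule.span k
    {x | ∃ g : G, ∃ a ∈ F.grading g, x = a ⊗ₜ[k] Finsupp.single g (1 : k)}

section Aux
variable {G : Type} [Group G] [Fintype G] [DecidableEq G] {k : Type} [Field k] [CharZero k]
  {A : Type} [AddCommGroup A] [Module k A] (F : GFrobeniusAlgebra G k A) (α : G → G → kˣ)

lemma proj_eq_ite (g h : G) (a : A) (ha : a ∈ F.grading g) :
    F.proj h a = if h = g then a else 0 := by
  split
  · next he => subst he; exact F.proj_of_mem h a ha
  · next he => exact F.proj_of_ne g h (fun e => he e.symm) a ha

lemma Phi_tmul (a : A) (g : G) (c : k) :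
    Phi F (a ⊗ₜ[k] Finsupp.single g c) = c • F.proj g a := by
  simp [Phi, Finsupp.lsum_single, LinearMap.toSpanSingleton_apply]

lemma Phi_tmul_homog (g : G) (a : A) (ha : a ∈ F.grading g) :
    Phi F (a ⊗ₜ[k] Finsupp.single g (1 : k)) = a := by
  rw [Phi_tmul, one_smul, F.proj_of_mem g a ha]

noncomputable def mulT : A →ₗ[k] A →ₗ[k] A :=
  ∑ g : G, ∑ h : G, ((α g h : kˣ) : k) • ((F.mul.comp (F.proj g)).compl₂ (F.proj h))

lemma mulT_apply (a b : A) :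
    mulT F α a b = ∑ g : G, ∑ h : G,
      ((α g h : kˣ) : k) • F.mul (F.proj g a) (F.proj h b) := by
  simp [mulT, LinearMap.sum_apply, LinearMap.smul_apply, LinearMap.compl₂_apply]

lemma mulT_homog {g h : G} {a b : A} (ha : a ∈ F.grading g) (hb : b ∈ F.grading h) :
    mulT F α a b = ((α g h : kˣ) : k) • F.mul a b := by
  rw [mulT_apply]
  rw [Finset.sum_eq_single g]
  · rw [Finset.sum_eq_single h]
    · rw [F.proj_of_mem g a ha, F.proj_of_mem h b hb]
    · intro h' _ hne
      rw [F.proj_of_ne h h' (fun e => hne e.symm) b hb]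
      simp
    · simp
  · intro g' _ hne
    rw [F.proj_of_ne g g' (fun e => hne e.symm) a ha]
    simp
  · simp

end Aux
section Aux2
set_option linter.unusedSectionVars false
variable {G : Type} [Group G] [Fintype G] [DecidableEq G] {k : Type} [Field k] [CharZero k]
  {A : Type} [AddCommGroup A] [Module k A] (F : GFrobeniusAlgebra G k A) (α : G → G → kˣ)

noncomputable def etaT : A →ₗ[k] A →ₗ[k] k :=
  ∑ g : G, ((α g g⁻¹ : kˣ) : k) • ((F.η.comp (F.proj g)).compl₂ (F.proj g⁻¹))

lemma etaT_apply (a b : A) :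
    etaT F α a b = ∑ g : G, ((α g g⁻¹ : kˣ) : k) * F.η (F.proj g a) (F.proj g⁻¹ b) := by
  simp [etaT, LinearMap.sum_apply, LinearMap.smul_apply, LinearMap.compl₂_apply,
    smul_eq_mul]

-- for `a ∈ A_g`, `η a d = η a (proj g⁻¹ d)`
lemma eta_proj_right {g : G} {a : A} (ha : a ∈ F.grading g) (d : A) :
    F.η a d = F.η a (F.proj g⁻¹ d) := by
  conv_lhs => rw [← F.sum_proj d, map_sum]
  rw [Finset.sum_eq_single g⁻¹]
  · intro h _ hne
    exact F.η_graded g h (fun e => hne (eq_inv_of_mul_eq_one_right e)) a ha _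
      (F.proj_mem h d)
  · simp

lemma etaT_left {g : G} {a : A} (ha : a ∈ F.grading g) (d : A) :
    etaT F α a d = ((α g g⁻¹ : kˣ) : k) * F.η a d := by
  rw [etaT_apply, Finset.sum_eq_single g]
  · rw [F.proj_of_mem g a ha, ← eta_proj_right F ha]
  · intro g' _ hne
    rw [F.proj_of_ne g g' (fun e => hne e.symm) a ha]
    simp
  · simp

noncomputable def phiT (ε : G → G → kˣ) (g : G) : A →ₗ[k] A :=
  ∑ h : G, ((ε g h : kˣ) : k) • ((F.φ g).comp (F.proj h))

lemma phiT_apply (ε : G → G → kˣ) (g : G) (a : A) :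
    phiT F ε g a = ∑ h : G, ((ε g h : kˣ) : k) • F.φ g (F.proj h a) := by
  simp [phiT, LinearMap.sum_apply, LinearMap.smul_apply]

lemma phiT_homog (ε : G → G → kˣ) (g : G) {h : G} {a : A} (ha : a ∈ F.grading h) :
    phiT F ε g a = ((ε g h : kˣ) : k) • F.φ g a := by
  rw [phiT_apply, Finset.sum_eq_single h]
  · rw [F.proj_of_mem h a ha]
  · intro h' _ hne
    rw [F.proj_of_ne h h' (fun e => hne e.symm) a ha]
    simp
  · simp

end Aux2
section Aux3
set_option linter.unusedSectionVars false
variable {G : Type} [Group G] {k : Type} [Field k]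
  (α : G → G → kˣ) (ε : G → G → kˣ)

lemma coc_k (hcoc : ∀ g h l : G, α g h * α (g * h) l = α h l * α g (h * l)) (g h l : G) :
    ((α g h : kˣ) : k) * ((α (g*h) l : kˣ) : k)
      = ((α h l : kˣ) : k) * ((α g (h*l) : kˣ) : k) := by
  exact_mod_cast congrArg (Units.val) (hcoc g h l)

lemma αne (g h : G) : ((α g h : kˣ) : k) ≠ 0 := Units.ne_zero _

lemma εne (g h : G) : ((ε g h : kˣ) : k) ≠ 0 := Units.ne_zero _

lemma α_one_left (hcoc : ∀ g h l : G, α g h * α (g * h) l = α h l * α g (h * l))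
    (hnorm : α 1 1 = 1) (g : G) : α 1 g = 1 := by
  have h := hcoc 1 1 g
  rw [one_mul, hnorm, one_mul, one_mul] at h
  have h2 : α 1 g * α 1 g = α 1 g * 1 := by rw [mul_one, ← h]
  exact (mul_left_cancel h2).symm ▸ rfl

lemma α_one_right (hcoc : ∀ g h l : G, α g h * α (g * h) l = α h l * α g (h * l))
    (hnorm : α 1 1 = 1) (g : G) : α g 1 = 1 := by
  have h := hcoc g 1 1
  rw [mul_one, hnorm, one_mul, mul_one] at h
  exact mul_right_cancel (h.trans (one_mul _).symm)

lemma αk_one_left (hcoc : ∀ g h l : G, α g h * α (g * h) l = α h l * α g (h * l))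
    (hnorm : α 1 1 = 1) (g : G) : ((α 1 g : kˣ) : k) = 1 := by
  rw [α_one_left α hcoc hnorm g]; rfl

lemma αk_one_right (hcoc : ∀ g h l : G, α g h * α (g * h) l = α h l * α g (h * l))
    (hnorm : α 1 1 = 1) (g : G) : ((α g 1 : kˣ) : k) = 1 := by
  rw [α_one_right α hcoc hnorm g]; rfl

lemma eps_k (hε : ∀ g h : G, ε g h = α g h * (α (g * h * g⁻¹) g)⁻¹) (g h : G) :
    ((ε g h : kˣ) : k) * ((α (g * h * g⁻¹) g : kˣ) : k) = ((α g h : kˣ) : k) := by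
  have : ε g h * α (g * h * g⁻¹) g = α g h := by rw [hε, inv_mul_cancel_right]
  exact_mod_cast congrArg Units.val this

end Aux3
section Aux4
set_option linter.unusedSectionVars false
variable {G : Type} [Group G] {k : Type} [Field k]
  (α : G → G → kˣ) (ε : G → G → kˣ)
  (hcoc : ∀ g h l : G, α g h * α (g * h) l = α h l * α g (h * l))
  (hnorm : α 1 1 = 1)
  (hε : ∀ g h : G, ε g h = α g h * (α (g * h * g⁻¹) g)⁻¹)

include hcoc hnorm hε

lemma eps_one_left (h : G) : ((ε 1 h : kˣ) : k) = 1 := by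
  have e := eps_k α ε hε 1 h
  rw [show (1 : G) * h * 1⁻¹ = h by group, αk_one_right α hcoc hnorm h, mul_one,
    αk_one_left α hcoc hnorm h] at e
  exact e

lemma eps_one_right (g : G) : ((ε g 1 : kˣ) : k) = 1 := by
  have e := eps_k α ε hε g 1
  rw [show g * 1 * g⁻¹ = 1 by group, αk_one_left α hcoc hnorm g,
    αk_one_right α hcoc hnorm g, mul_one] at e
  exact e

lemma eps_diag (g : G) : ((ε g g : kˣ) : k) = 1 := by
  have e := eps_k α ε hε g g
  rw [show g * g * g⁻¹ = g by group] at e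
  exact mul_right_cancel₀ (αne α g g) (e.trans (one_mul _).symm)

-- the key conjugation identity E0 : α(h,g⁻¹)·α(ghg⁻¹,g) = α(g,h)·α(g⁻¹,ghg⁻¹)
lemma E0 (g h : G) :
    ((α h g⁻¹ : kˣ) : k) * ((α (g*h*g⁻¹) g : kˣ) : k)
      = ((α g h : kˣ) : k) * ((α g⁻¹ (g*h*g⁻¹) : kˣ) : k) := by
  have h5 := coc_k (k := k) α hcoc g⁻¹ (g*h*g⁻¹) g
  rw [show g⁻¹ * (g*h*g⁻¹) = h*g⁻¹ by group, show (g*h*g⁻¹)*g = g*h by group] at h5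
  have h6 := coc_k (k := k) α hcoc g⁻¹ g h
  rw [show g⁻¹ * g = (1 : G) by group, αk_one_left α hcoc hnorm h, mul_one] at h6
  have h7 := coc_k (k := k) α hcoc h g⁻¹ g
  rw [show g⁻¹ * g = (1 : G) by group, αk_one_right α hcoc hnorm h, mul_one] at h7
  set N := ((α g⁻¹ (g*h*g⁻¹) : kˣ) : k)
  set W := ((α (h*g⁻¹) g : kˣ) : k) with hW
  set K := ((α (g*h*g⁻¹) g : kˣ) : k)
  set M := ((α g⁻¹ (g*h) : kˣ) : k)
  set V := ((α g⁻¹ g : kˣ) : k)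
  set J := ((α g h : kˣ) : k)
  set L := ((α h g⁻¹ : kˣ) : k)
  -- h5 : N * W = K * M ; h6 : V = J * M ; h7 : L * W = V
  have key : (L * K) * (W * M) = (J * N) * (W * M) := by
    linear_combination (-J*M) * h5 + (K*M) * h6 + (K*M) * h7
  have hWM : W * M ≠ 0 := mul_ne_zero (αne α _ _) (αne α _ _)
  exact mul_right_cancel₀ hWM key

-- E1' : ε(s·t, h) = ε(s, t h t⁻¹) · ε(t, h)
lemma E1' (s t h : G) :
    ((ε (s*t) h : kˣ) : k) = ((ε s (t*h*t⁻¹) : kˣ) : k) * ((ε t h : kˣ) : k) := by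
  have h1 := coc_k (k := k) α hcoc s t h
  have h2 := coc_k (k := k) α hcoc s (t*h*t⁻¹) t
  rw [show s * (t*h*t⁻¹) = s*t*h*t⁻¹ by group, show (t*h*t⁻¹)*t = t*h by group] at h2
  have h3 := coc_k (k := k) α hcoc (s*t*h*t⁻¹*s⁻¹) s t
  rw [show (s*t*h*t⁻¹*s⁻¹)*s = s*t*h*t⁻¹ by group] at h3
  have e1 := eps_k α ε hε (s*t) h
  rw [show (s*t)*h*(s*t)⁻¹ = s*t*h*t⁻¹*s⁻¹ by group] at e1
  have e2 := eps_k α ε hε s (t*h*t⁻¹)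
  rw [show s*(t*h*t⁻¹)*s⁻¹ = s*t*h*t⁻¹*s⁻¹ by group] at e2
  have e3 := eps_k α ε hε t h
  set Av := ((α s t : kˣ) : k)
  set B := ((α (s*t) h : kˣ) : k)
  set C := ((α t h : kˣ) : k)
  set D := ((α s (t*h) : kˣ) : k)
  set E := ((α s (t*h*t⁻¹) : kˣ) : k)
  set Ff := ((α (s*t*h*t⁻¹) t : kˣ) : k)
  set X := ((α (t*h*t⁻¹) t : kˣ) : k)
  set Y := ((α (s*t*h*t⁻¹*s⁻¹) s : kˣ) : k)
  set Z := ((α (s*t*h*t⁻¹*s⁻¹) (s*t) : kˣ) : k)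
  set p := ((ε (s*t) h : kˣ) : k)
  set q := ((ε s (t*h*t⁻¹) : kˣ) : k)
  set r := ((ε t h : kˣ) : k)
  -- h1 : Av*B = C*D ; h2 : E*Ff = X*D ; h3 : Y*Ff = Av*Z
  -- e1 : p*Z = B ; e2 : q*Y = E ; e3 : r*X = C
  have key2 : (B*Y*X) * Ff = (E*C*Z) * Ff := by
    linear_combination (B*X) * h3 + (X*Z) * h1 + (-(C*Z)) * h2
  have k2 : B*Y*X = E*C*Z := mul_right_cancel₀ (αne α _ _) key2
  have key : p * (Z*Y*X) = (q*r) * (Z*Y*X) := by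
    linear_combination (Y*X) * e1 + (-(r*Z*X)) * e2 + (-(E*Z)) * e3 + k2
  have hzyx : Z*Y*X ≠ 0 := by
    exact mul_ne_zero (mul_ne_zero (αne α _ _) (αne α _ _)) (αne α _ _)
  exact mul_right_cancel₀ hzyx key

-- E2' : ε(g, x·y) · α(x,y) = ε(g,x) · ε(g,y) · α(gxg⁻¹, gyg⁻¹)
lemma E2' (g x y : G) :
    ((ε g (x*y) : kˣ) : k) * ((α x y : kˣ) : k)
      = ((ε g x : kˣ) : k) * ((ε g y : kˣ) : k) * ((α (g*x*g⁻¹) (g*y*g⁻¹) : kˣ) : k) := by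
  have hi := coc_k (k := k) α hcoc g x y
  have hii := coc_k (k := k) α hcoc (g*x*g⁻¹) g y
  rw [show (g*x*g⁻¹)*g = g*x by group] at hii
  have hiii := coc_k (k := k) α hcoc (g*x*g⁻¹) (g*y*g⁻¹) g
  rw [show (g*x*g⁻¹)*(g*y*g⁻¹) = g*(x*y)*g⁻¹ by group,
    show (g*y*g⁻¹)*g = g*y by group] at hiii
  have e1 := eps_k α ε hε g (x*y)
  have e2 := eps_k α ε hε g x
  have e3 := eps_k α ε hε g y
  set A1 := ((α g x : kˣ) : k)
  set B1 := ((α (g*x) y : kˣ) : k)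
  set C1 := ((α x y : kˣ) : k)
  set D1 := ((α g (x*y) : kˣ) : k)
  set P := ((α (g*x*g⁻¹) g : kˣ) : k)
  set Q := ((α g y : kˣ) : k)
  set R := ((α (g*x*g⁻¹) (g*y) : kˣ) : k)
  set S := ((α (g*x*g⁻¹) (g*y*g⁻¹) : kˣ) : k)
  set T := ((α (g*(x*y)*g⁻¹) g : kˣ) : k)
  set U := ((α (g*y*g⁻¹) g : kˣ) : k)
  set p := ((ε g (x*y) : kˣ) : k)
  set q := ((ε g x : kˣ) : k)
  set r := ((ε g y : kˣ) : k)
  -- hi : A1*B1 = C1*D1 ; hii : P*B1 = Q*R ; hiii : S*T = U*R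
  -- e1 : p*T = D1 ; e2 : q*P = A1 ; e3 : r*U = Q
  have key2 : (A1*Q*S*T) * B1 = (U*P*C1*D1) * B1 := by
    linear_combination (U*Q*R) * hi + (-(U*C1*D1)) * hii + (A1*Q*B1) * hiii
  have k2 : A1*Q*S*T = U*P*C1*D1 := mul_right_cancel₀ (αne α _ _) key2
  have key : (p * C1) * (T*P*U) = (q*r*S) * (T*P*U) := by
    linear_combination (C1*P*U) * e1 + (-(r*S*T*U)) * e2 + (-(A1*S*T)) * e3 + (-1 : k) * k2
  have htpu : T*P*U ≠ 0 :=
    mul_ne_zero (mul_ne_zero (αne α _ _) (αne α _ _)) (αne α _ _)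
  exact mul_right_cancel₀ htpu key

-- E3' : α(x,x⁻¹) = ε(g,x)·ε(g,x⁻¹)·α(gxg⁻¹, (gxg⁻¹)⁻¹)
lemma E3' (g x : G) :
    ((α x x⁻¹ : kˣ) : k)
      = ((ε g x : kˣ) : k) * ((ε g x⁻¹ : kˣ) : k)
        * ((α (g*x*g⁻¹) (g*x*g⁻¹)⁻¹ : kˣ) : k) := by
  have h := E2' α ε hcoc hnorm hε g x x⁻¹
  rw [show x * x⁻¹ = (1 : G) by group, eps_one_right α ε hcoc hnorm hε g, one_mul,
    show g*x⁻¹*g⁻¹ = (g*x*g⁻¹)⁻¹ by group] at h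
  exact h

-- E4' : ε(h,g)·α([g,h], hgh⁻¹) = α([g,h], h)·ε(g⁻¹, ghg⁻¹)
lemma E4' (g h : G) :
    ((ε h g : kˣ) : k) * ((α (g*h*g⁻¹*h⁻¹) (h*g*h⁻¹) : kˣ) : k)
      = ((α (g*h*g⁻¹*h⁻¹) h : kˣ) : k) * ((ε g⁻¹ (g*h*g⁻¹) : kˣ) : k) := by
  have h1 := coc_k (k := k) α hcoc (g*h*g⁻¹*h⁻¹) (h*g*h⁻¹) h
  rw [show (g*h*g⁻¹*h⁻¹)*(h*g*h⁻¹) = g by group,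
    show (h*g*h⁻¹)*h = h*g by group] at h1
  have h2 := coc_k (k := k) α hcoc (g*h*g⁻¹*h⁻¹) h g
  rw [show (g*h*g⁻¹*h⁻¹)*h = g*h*g⁻¹ by group] at h2
  have e0 := E0 α ε hcoc hnorm hε g h
  have e1 := eps_k α ε hε h g
  have e2 := eps_k α ε hε g⁻¹ (g*h*g⁻¹)
  rw [show g⁻¹*(g*h*g⁻¹)*g⁻¹⁻¹ = h by group] at e2
  set P1 := ((α (g*h*g⁻¹*h⁻¹) (h*g*h⁻¹) : kˣ) : k)
  set P2 := ((α (h*g*h⁻¹) h : kˣ) : k)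
  set C := ((α (g*h*g⁻¹*h⁻¹) h : kˣ) : k)
  set H := ((α (g*h*g⁻¹*h⁻¹) (h*g) : kˣ) : k)
  set J := ((α g h : kˣ) : k)
  set Jg := ((α h g : kˣ) : k)
  set K := ((α (g*h*g⁻¹) g : kˣ) : k)
  set N := ((α g⁻¹ (g*h*g⁻¹) : kˣ) : k)
  set L := ((α h g⁻¹ : kˣ) : k)
  set p := ((ε h g : kˣ) : k)
  set q := ((ε g⁻¹ (g*h*g⁻¹) : kˣ) : k)
  -- h1 : P1*J = P2*H ; h2 : C*K = Jg*H ; e0 : L*K = J*N ; e1 : p*P2 = Jg ; e2 : q*L = N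
  have key_a : (Jg*P1*L) * (J*K) = (P2*C*N) * (J*K) := by
    linear_combination (Jg*L*K) * h1 + (-(P2*N*J)) * h2 + (Jg*P2*H) * e0
  have ka : Jg*P1*L = P2*C*N :=
    mul_right_cancel₀ (mul_ne_zero (αne α _ _) (αne α _ _)) key_a
  have key : (p * P1) * (P2*L) = (C * q) * (P2*L) := by
    linear_combination (P1*L) * e1 + ka + (-(C*P2)) * e2
  exact mul_right_cancel₀ (mul_ne_zero (αne α _ _) (αne α _ _)) key

end Aux4
section Aux5
set_option linter.unusedSectionVars false
variable {G : Type} [Group G] [Fintype G] [DecidableEq G] {k : Type} [Field k] [CharZero k]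
  {A : Type} [AddCommGroup A] [Module k A] (F : GFrobeniusAlgebra G k A)

noncomputable def Psi : A →ₗ[k] TensorProduct k A (G →₀ k) :=
  ∑ g : G, ((TensorProduct.mk k A (G →₀ k)).flip (Finsupp.single g 1)).comp (F.proj g)

lemma Psi_apply (a : A) :
    Psi F a = ∑ g : G, F.proj g a ⊗ₜ[k] Finsupp.single g (1 : k) := by
  simp [Psi, LinearMap.sum_apply, TensorProduct.mk_apply]

lemma Psi_mem (a : A) : Psi F a ∈ hatTensor F := by
  rw [Psi_apply]
  exact Submodule.sum_mem _ fun g _ =>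
    Submodule.subset_span ⟨g, _, F.proj_mem g a, rfl⟩

lemma Phi_Psi (a : A) : Phi F (Psi F a) = a := by
  rw [Psi_apply, map_sum]
  simp only [Phi_tmul, one_smul]
  rw [Finset.sum_congr rfl fun g _ => F.proj_of_mem g _ (F.proj_mem g a), F.sum_proj]

lemma Psi_Phi : ∀ x ∈ hatTensor F, Psi F (Phi F x) = x := by
  intro x hx
  induction hx using Submodule.span_induction with
  | mem x hx =>
    obtain ⟨g, a, ha, rfl⟩ := hx
    rw [Phi_tmul_homog F g a ha, Psi_apply, Finset.sum_eq_single g]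
    · rw [F.proj_of_mem g a ha]
    · intro h _ hne
      rw [F.proj_of_ne g h (fun e => hne e.symm) a ha, TensorProduct.zero_tmul]
    · simp
  | zero => simp
  | add x y hx hy ihx ihy => simp only [map_add]; rw [ihx, ihy]
  | smul c x hx ih => rw [map_smul, map_smul, ih]

lemma homog_ext₁ {M : Type} [AddCommMonoid M] [Module k M] (f g : A →ₗ[k] M)
    (H : ∀ x : G, ∀ a ∈ F.grading x, f a = g a) : f = g := by
  ext a
  rw [← F.sum_proj a, map_sum, map_sum]
  exact Finset.sum_congr rfl fun x _ => H x _ (F.proj_mem x a)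

end Aux5
section Aux6
set_option linter.unusedSectionVars false
set_option maxHeartbeats 1000000
variable {G : Type} [Group G] [Fintype G] [DecidableEq G] {k : Type} [Field k] [CharZero k]
  {A : Type} [AddCommGroup A] [Module k A]

noncomputable def twistF (F : GFrobeniusAlgebra G k A) (α ε : G → G → kˣ)
    (hcoc : ∀ g h l : G, α g h * α (g * h) l = α h l * α g (h * l))
    (hnorm : α 1 1 = 1)
    (hε : ∀ g h : G, ε g h = α g h * (α (g * h * g⁻¹) g)⁻¹) :
    GFrobeniusAlgebra G k A where
  grading := F.grading
  proj := F.proj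
  proj_mem := F.proj_mem
  proj_of_mem := F.proj_of_mem
  proj_of_ne := F.proj_of_ne
  sum_proj := F.sum_proj
  finiteDim := F.finiteDim
  mul := mulT F α
  mul_assoc' := by
    have key3 : ∀ x y z : G, ∀ a ∈ F.grading x, ∀ b ∈ F.grading y, ∀ c ∈ F.grading z,
        mulT F α (mulT F α a b) c = mulT F α a (mulT F α b c) := by
      intro x y z a ha b hb c hc
      rw [mulT_homog F α ha hb, mulT_homog F α hb hc]
      simp only [map_smul, LinearMap.smul_apply]
      rw [mulT_homog F α (F.mul_mem x y a ha b hb) hc,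
        mulT_homog F α ha (F.mul_mem y z b hb c hc), F.mul_assoc',
        smul_smul, smul_smul, coc_k α hcoc x y z]
    have key2 : ∀ x y : G, ∀ a ∈ F.grading x, ∀ b ∈ F.grading y, ∀ c : A,
        mulT F α (mulT F α a b) c = mulT F α a (mulT F α b c) := by
      intro x y a ha b hb c
      have h := homog_ext₁ F (mulT F α (mulT F α a b))
        ((mulT F α a).comp (mulT F α b))
        (fun z c hc => by simpa using key3 x y z a ha b hb c hc)
      simpa using LinearMap.congr_fun h c
    have key1 : ∀ x : G, ∀ a ∈ F.grading x, ∀ b c : A,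
        mulT F α (mulT F α a b) c = mulT F α a (mulT F α b c) := by
      intro x a ha b c
      have h := homog_ext₁ F (((mulT F α).flip c).comp (mulT F α a))
        ((mulT F α a).comp ((mulT F α).flip c))
        (fun y b hb => by simpa using key2 x y a ha b hb c)
      simpa using LinearMap.congr_fun h b
    intro a b c
    have h := homog_ext₁ F (((mulT F α).flip c).comp ((mulT F α).flip b))
      ((mulT F α).flip (mulT F α b c))
      (fun x a ha => by simpa using key1 x a ha b c)
    simpa using LinearMap.congr_fun h a
  one := F.one
  one_mem := F.one_mem
  one_mul' := by
    intro a
    have h := homog_ext₁ F (mulT F α F.one) LinearMap.id (fun x a ha => by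
      rw [mulT_homog F α F.one_mem ha, αk_one_left α hcoc hnorm, one_smul,
        F.one_mul', LinearMap.id_apply])
    simpa using LinearMap.congr_fun h a
  mul_one' := by
    intro a
    have h := homog_ext₁ F ((mulT F α).flip F.one) LinearMap.id (fun x a ha => by
      have : mulT F α a F.one = a := by
        rw [mulT_homog F α ha F.one_mem, αk_one_right α hcoc hnorm, one_smul,
          F.mul_one']
      simpa using this)
    simpa using LinearMap.congr_fun h a
  mul_mem := fun g h a ha b hb => by
    rw [mulT_homog F α ha hb]
    exact Submodule.smul_mem _ _ (F.mul_mem g h a ha b hb)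
  η := etaT F α
  η_nondeg := by
    intro a H
    have hg : ∀ g : G, F.proj g a = 0 := by
      intro g
      apply F.η_nondeg
      intro b
      have h1 : F.η (F.proj g a) b = F.η (F.proj g a) (F.proj g⁻¹ b) :=
        eta_proj_right F (F.proj_mem g a) b
      have h2 := H (F.proj g⁻¹ b)
      rw [etaT_apply, Finset.sum_eq_single g] at h2
      · rw [F.proj_of_mem g⁻¹ _ (F.proj_mem g⁻¹ b)] at h2
        rw [h1]
        exact (mul_eq_zero.mp h2).resolve_left (αne α g g⁻¹)
      · intro g' _ hne
        rw [F.proj_of_ne g⁻¹ g'⁻¹ (fun e => hne (inv_injective e).symm) _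
          (F.proj_mem g⁻¹ b)]
        simp
      · simp
    rw [← F.sum_proj a]
    exact Finset.sum_eq_zero fun g _ => hg g
  η_graded := by
    intro g h hgh a ha b hb
    rw [etaT_left F α ha, F.η_graded g h hgh a ha b hb, mul_zero]
  η_invariant := by
    have key3 : ∀ x y z : G, ∀ a ∈ F.grading x, ∀ b ∈ F.grading y, ∀ c ∈ F.grading z,
        etaT F α a (mulT F α b c) = etaT F α (mulT F α a b) c := by
      intro x y z a ha b hb c hc
      rw [mulT_homog F α hb hc, mulT_homog F α ha hb]
      simp only [map_smul, LinearMap.smul_apply, smul_eq_mul]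
      rw [etaT_left F α ha, etaT_left F α (F.mul_mem x y a ha b hb),
        F.η_invariant a b c]
      by_cases hxyz : x * y * z = 1
      · have h1 : x⁻¹ = y * z := inv_eq_of_mul_eq_one_right (by
          rw [← mul_assoc]; exact hxyz)
        have h2 : (x * y)⁻¹ = z := inv_eq_of_mul_eq_one_right hxyz
        rw [h1, h2]
        linear_combination (-(F.η (F.mul a b) c)) * coc_k α hcoc x y z
      · have e1 : F.η (F.mul a b) c = 0 :=
          F.η_graded (x*y) z hxyz _ (F.mul_mem x y a ha b hb) c hc
        rw [e1]; ring
    have key2 : ∀ x y : G, ∀ a ∈ F.grading x, ∀ b ∈ F.grading y, ∀ c : A,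
        etaT F α a (mulT F α b c) = etaT F α (mulT F α a b) c := by
      intro x y a ha b hb c
      have h := homog_ext₁ F ((etaT F α a).comp (mulT F α b))
        (etaT F α (mulT F α a b))
        (fun z c hc => by simpa using key3 x y z a ha b hb c hc)
      simpa using LinearMap.congr_fun h c
    have key1 : ∀ x : G, ∀ a ∈ F.grading x, ∀ b c : A,
        etaT F α a (mulT F α b c) = etaT F α (mulT F α a b) c := by
      intro x a ha b c
      have h := homog_ext₁ F ((etaT F α a).comp ((mulT F α).flip c))
        (((etaT F α).flip c).comp (mulT F α a))
        (fun y b hb => by simpa using key2 x y a ha b hb c)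
      simpa using LinearMap.congr_fun h b
    intro a b c
    have h := homog_ext₁ F ((etaT F α).flip (mulT F α b c))
      (((etaT F α).flip c).comp ((mulT F α).flip b))
      (fun x a ha => by simpa using key1 x a ha b c)
    simpa using LinearMap.congr_fun h a
  φ := phiT F ε
  φ_one := by
    refine homog_ext₁ F _ _ fun x a ha => ?_
    rw [phiT_homog F ε 1 ha, eps_one_left α ε hcoc hnorm hε x, one_smul, F.φ_one]
  φ_mul := by
    intro g h
    refine homog_ext₁ F _ _ fun x a ha => ?_
    rw [LinearMap.comp_apply, phiT_homog F ε (g*h) ha, phiT_homog F ε h ha,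
      map_smul, phiT_homog F ε g (F.φ_grading h x a ha), F.φ_mul,
      LinearMap.comp_apply, smul_smul, E1' α ε hcoc hnorm hε g h x,
      mul_comm ((ε g (h*x*h⁻¹) : kˣ) : k) ((ε h x : kˣ) : k)]
  φ_algebra := by
    have key : ∀ g x y : G, ∀ a ∈ F.grading x, ∀ b ∈ F.grading y,
        phiT F ε g (mulT F α a b) = mulT F α (phiT F ε g a) (phiT F ε g b) := by
      intro g x y a ha b hb
      rw [mulT_homog F α ha hb, map_smul, phiT_homog F ε g (F.mul_mem x y a ha b hb),
        phiT_homog F ε g ha, phiT_homog F ε g hb]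
      simp only [map_smul, LinearMap.smul_apply]
      rw [mulT_homog F α (F.φ_grading g x a ha) (F.φ_grading g y b hb), F.φ_algebra]
      rw [smul_smul, smul_smul, smul_smul]
      have hs : ((α x y : kˣ) : k) * ((ε g (x*y) : kˣ) : k)
          = ((ε g y : kˣ) : k) * ((ε g x : kˣ) : k)
            * ((α (g*x*g⁻¹) (g*y*g⁻¹) : kˣ) : k) := by
        linear_combination E2' α ε hcoc hnorm hε g x y
      rw [hs]
    have keyB : ∀ g x : G, ∀ a ∈ F.grading x, ∀ b : A,
        phiT F ε g (mulT F α a b) = mulT F α (phiT F ε g a) (phiT F ε g b) := by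
      intro g x a ha b
      have h := homog_ext₁ F ((phiT F ε g).comp (mulT F α a))
        ((mulT F α (phiT F ε g a)).comp (phiT F ε g))
        (fun y b hb => by simpa using key g x y a ha b hb)
      simpa using LinearMap.congr_fun h b
    intro g a b
    have h := homog_ext₁ F ((phiT F ε g).comp ((mulT F α).flip b))
      (((mulT F α).flip (phiT F ε g b)).comp (phiT F ε g))
      (fun x a ha => by simpa using keyB g x a ha b)
    simpa using LinearMap.congr_fun h a
  φ_unit := fun g => by
    rw [phiT_homog F ε g F.one_mem, eps_one_right α ε hcoc hnorm hε g, one_smul,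
      F.φ_unit]
  φ_grading := fun g h a ha => by
    rw [phiT_homog F ε g ha]
    exact Submodule.smul_mem _ _ (F.φ_grading g h a ha)
  χ := F.χ
  twisted_comm := by
    intro g a ha b
    have key : ∀ y : G, ∀ b ∈ F.grading y,
        mulT F α a b = mulT F α (phiT F ε g b) a := by
      intro y b hb
      rw [mulT_homog F α ha hb, phiT_homog F ε g hb, map_smul,
        LinearMap.smul_apply, mulT_homog F α (F.φ_grading g y b hb) ha,
        F.twisted_comm g a ha b, smul_smul, ← eps_k α ε hε g y]
    have h := homog_ext₁ F (mulT F α a)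
      (((mulT F α).flip a).comp (phiT F ε g))
      (fun y b hb => by simpa using key y b hb)
    simpa using LinearMap.congr_fun h b
  self_invariance := fun g a ha => by
    rw [phiT_homog F ε g ha, eps_diag α ε hcoc hnorm hε, one_smul,
      F.self_invariance g a ha]
  metric_invariance := by
    have key : ∀ g x y : G, ∀ a ∈ F.grading x, ∀ b ∈ F.grading y,
        etaT F α (phiT F ε g a) (phiT F ε g b)
          = ((((F.χ g)⁻¹ : kˣ) : k)) ^ 2 * etaT F α a b := by
      intro g x y a ha b hb
      rw [phiT_homog F ε g ha, phiT_homog F ε g hb]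
      simp only [map_smul, LinearMap.smul_apply, smul_eq_mul]
      rw [etaT_left F α (F.φ_grading g x a ha), F.metric_invariance,
        etaT_left F α ha]
      by_cases hy : y = x⁻¹
      · subst hy
        linear_combination (-((((F.χ g)⁻¹ : kˣ) : k)) ^ 2 * (F.η a b))
          * E3' α ε hcoc hnorm hε g x
      · rw [F.η_graded x y (fun e => hy (eq_inv_of_mul_eq_one_right e)) a ha b hb]
        ring
    have keyB : ∀ g x : G, ∀ a ∈ F.grading x, ∀ b : A,
        etaT F α (phiT F ε g a) (phiT F ε g b)
          = ((((F.χ g)⁻¹ : kˣ) : k)) ^ 2 * etaT F α a b := by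
      intro g x a ha b
      have h := homog_ext₁ F ((etaT F α (phiT F ε g a)).comp (phiT F ε g))
        (((((F.χ g)⁻¹ : kˣ) : k)) ^ 2 • (etaT F α a))
        (fun y b hb => by simpa using key g x y a ha b hb)
      simpa using LinearMap.congr_fun h b
    intro g a b
    have h := homog_ext₁ F (((etaT F α).flip (phiT F ε g b)).comp (phiT F ε g))
      (((((F.χ g)⁻¹ : kˣ) : k)) ^ 2 • ((etaT F α).flip b))
      (fun x a ha => by simpa using keyB g x a ha b)
    simpa using LinearMap.congr_fun h a
  trace_axiom := by
    intro g h c hc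
    have hL : F.proj g ∘ₗ mulT F α c ∘ₗ phiT F ε h ∘ₗ F.proj g
        = (((ε h g : kˣ) : k) * ((α (g*h*g⁻¹*h⁻¹) (h*g*h⁻¹) : kˣ) : k))
          • (F.proj g ∘ₗ F.mul c ∘ₗ F.φ h ∘ₗ F.proj g) := by
      refine LinearMap.ext fun a => ?_
      simp only [LinearMap.comp_apply, LinearMap.smul_apply]
      rw [phiT_homog F ε h (F.proj_mem g a),
        map_smul, mulT_homog F α hc (F.φ_grading h g _ (F.proj_mem g a))]
      rw [smul_smul, mul_comm, map_smul]
    have hR : F.proj h ∘ₗ phiT F ε g⁻¹ ∘ₗ mulT F α c ∘ₗ F.proj h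
        = (((α (g*h*g⁻¹*h⁻¹) h : kˣ) : k) * ((ε g⁻¹ (g*h*g⁻¹) : kˣ) : k))
          • (F.proj h ∘ₗ F.φ g⁻¹ ∘ₗ F.mul c ∘ₗ F.proj h) := by
      refine LinearMap.ext fun a => ?_
      simp only [LinearMap.comp_apply, LinearMap.smul_apply]
      have hmem : F.mul c (F.proj h a) ∈ F.grading (g*h*g⁻¹) := by
        rw [show g*h*g⁻¹ = (g*h*g⁻¹*h⁻¹)*h by group]
        exact F.mul_mem _ h c hc _ (F.proj_mem h a)
      rw [mulT_homog F α hc (F.proj_mem h a), map_smul, phiT_homog F ε g⁻¹ hmem,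
        smul_smul, mul_comm, map_smul]
    rw [hL, hR, map_smul, map_smul, smul_eq_mul, smul_eq_mul]
    linear_combination (((ε h g : kˣ) : k) * ((α (g*h*g⁻¹*h⁻¹) (h*g*h⁻¹) : kˣ) : k))
        * F.trace_axiom g h c hc
      + ((((F.χ g⁻¹ : kˣ)) : k)
          * LinearMap.trace k A (F.proj h ∘ₗ F.φ g⁻¹ ∘ₗ F.mul c ∘ₗ F.proj h))
        * E4' α ε hcoc hnorm hε g h

end Aux6
lemma twistedMul_single {G : Type} [Group G] {k : Type} [Field k]
    (α : G → G → kˣ) (g h : G) :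
    twistedMul α (Finsupp.single g (1 : k)) (Finsupp.single h (1 : k))
      = Finsupp.single (g * h) ((α g h : kˣ) : k) := by
  unfold twistedMul
  rw [Finsupp.sum_single_index (by simp), Finsupp.sum_single_index (by simp)]
  simp

/-- For a `G`-Frobenius algebra `A` and a normalized 2-cocycle `α` with
`ε(g,h) = α(g,h)·α(g*h*g⁻¹,g)⁻¹`, the map `a ⊗ ĝ ↦ a` (for `a ∈ A_g`) is an isomorphism of
`G`-Frobenius algebras from the tensor product `A ⊗̂ k^α[G]` (with componentwise
multiplication `(a⊗x)(b⊗y) = (a·b)⊗(x·y)`, unit `1⊗ê`, form `η⊗η'`, diagonal action and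
product character) onto the discrete-torsion twist `s(α,ε)(A)`. -/
theorem tensor_with_twisted_group_ring_is_twist (G : Type) [Group G] [Fintype G]
    [DecidableEq G] (k : Type) [Field k] [CharZero k]
    (A : Type) [AddCommGroup A] [Module k A] (F : GFrobeniusAlgebra G k A)
    (α : G → G → kˣ)
    (hcoc : ∀ g h l : G, α g h * α (g * h) l = α h l * α g (h * l))
    (hnorm : α 1 1 = 1)
    (ε : G → G → kˣ) (hε : ∀ g h : G, ε g h = α g h * (α (g * h * g⁻¹) g)⁻¹) :
    -- the map is `a ⊗ ĝ ↦ a` on the graded pieces `A_g ⊗ k·ĝ`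
    (∀ g : G, ∀ a ∈ F.grading g, Phi F (a ⊗ₜ[k] Finsupp.single g (1 : k)) = a) ∧
    -- it is a linear bijection from `A ⊗̂ k^α[G]` onto `A`
    Set.InjOn (Phi F) (hatTensor F : Set (TensorProduct k A (G →₀ k))) ∧
    (Phi F) '' (hatTensor F : Set (TensorProduct k A (G →₀ k))) = Set.univ ∧
    -- and it intertwines all structures with those of the twist `s(α,ε)(A)`
    (∃ F' : GFrobeniusAlgebra G k A,
      -- `F'` is the twist `s(α,ε)(A)`:
      F'.grading = F.grading ∧
      F'.proj = F.proj ∧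
      F'.one = F.one ∧
      F'.χ = F.χ ∧
      (∀ (g h : G), ∀ a ∈ F.grading g, ∀ b ∈ F.grading h,
        F'.mul a b = ((α g h : kˣ) : k) • F.mul a b) ∧
      (∀ g : G, ∀ a ∈ F.grading g, ∀ b ∈ F.grading g⁻¹,
        F'.η a b = ((α g g⁻¹ : kˣ) : k) * F.η a b) ∧
      (∀ (g h : G), ∀ a ∈ F.grading h,
        F'.φ g a = ((ε g h : kˣ) : k) • F.φ g a) ∧
      -- `Phi` intertwines the multiplications:
      (∀ (g h : G), ∀ a ∈ F.grading g, ∀ b ∈ F.grading h,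
        Phi F ((F.mul a b) ⊗ₜ[k]
            twistedMul α (Finsupp.single g (1 : k)) (Finsupp.single h (1 : k)))
          = F'.mul (Phi F (a ⊗ₜ[k] Finsupp.single g (1 : k)))
              (Phi F (b ⊗ₜ[k] Finsupp.single h (1 : k)))) ∧
      -- the units:
      Phi F (F.one ⊗ₜ[k] Finsupp.single (1 : G) (1 : k)) = F'.one ∧
      -- the bilinear forms (`η ⊗ η'` with `η'(ĝ,ĥ) = α(g,g⁻¹)` if `h = g⁻¹`, else `0`):
      (∀ (g h : G), ∀ a ∈ F.grading g, ∀ b ∈ F.grading h,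
        F'.η (Phi F (a ⊗ₜ[k] Finsupp.single g (1 : k)))
            (Phi F (b ⊗ₜ[k] Finsupp.single h (1 : k)))
          = F.η a b * (if h = g⁻¹ then ((α g g⁻¹ : kˣ) : k) else 0)) ∧
      -- and the `G`-actions (`φ ⊗ φ'` with `φ'_g(ĥ) = ε(g,h)·(g*h*g⁻¹)^`):
      (∀ (g h : G), ∀ a ∈ F.grading h,
        F'.φ g (Phi F (a ⊗ₜ[k] Finsupp.single h (1 : k)))
          = Phi F ((F.φ g a) ⊗ₜ[k]
              (((ε g h : kˣ) : k) • Finsupp.single (g * h * g⁻¹) (1 : k))))) := by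
  refine ⟨fun g a ha => Phi_tmul_homog F g a ha, ?_, ?_, ?_⟩
  · intro x hx y hy he
    rw [← Psi_Phi F x hx, ← Psi_Phi F y hy, he]
  · apply Set.eq_univ_of_forall
    intro a
    exact ⟨Psi F a, Psi_mem F a, Phi_Psi F a⟩
  · refine ⟨twistF F α ε hcoc hnorm hε, rfl, rfl, rfl, rfl,
      fun g h a ha b hb => mulT_homog F α ha hb,
      fun g a ha b _ => etaT_left F α ha b,
      fun g h a ha => phiT_homog F ε g ha,
      ?_, ?_, ?_, ?_⟩
    · intro g h a ha b hb
      rw [twistedMul_single, Phi_tmul, F.proj_of_mem _ _ (F.mul_mem g h a ha b hb),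
        Phi_tmul_homog F g a ha, Phi_tmul_homog F h b hb]
      exact (mulT_homog F α ha hb).symm
    · exact Phi_tmul_homog F 1 F.one F.one_mem
    · intro g h a ha b hb
      rw [Phi_tmul_homog F g a ha, Phi_tmul_homog F h b hb]
      show etaT F α a b = _
      by_cases hinv : h = g⁻¹
      · subst hinv
        rw [if_pos rfl, etaT_left F α ha b, mul_comm]
      · rw [if_neg hinv, etaT_left F α ha b,
          F.η_graded g h (fun e => hinv (eq_inv_of_mul_eq_one_right e)) a ha b hb]
        ring
    · intro g h a ha
      rw [Phi_tmul_homog F h a ha, TensorProduct.tmul_smul, map_smul,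
        Phi_tmul_homog F (g*h*g⁻¹) _ (F.φ_grading g h a ha)]
      exact phiT_homog F ε g ha
end

section
/- Let H be an abelian group, k a field, and B = ⊕_{h∈H} B_h an H-graded associative unital k-algebra with unit 1 ∈ B_e and B_h·B_{h'} ⊆ B_{h·h'}, equipped with an additional H-action τ : H → GL_k(B) (a group homomorphism into k-linear automorphisms) such that τ(h)(B_{h'}) ⊆ B_{h·h'} and τ(h)(a·b) = a·τ(h)(b) for all a,b ∈ B and h ∈ H (i.e. B is H-homogeneous). Then for every h ∈ H: (i) B_h = B_e·τ(h)(1); (ii) the map B_e → B_h given by a ↦ a·τ(h)(1) is a k-linear isomorphism; and (iii) for all h, h' ∈ H the k-linear span of the products B_h·B_{h'} equals B_{h·h'} (B is k[H]-Galois over B_e). In particular all graded components of B are isomorphic as B_e-modules. -/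
/-- Let `B = ⊕_h B_h` be an `H`-graded associative unital `k`-algebra (`H`
an abelian group) which is `H`-homogeneous: it carries a second `H`-action `τ` by `k`-linear
automorphisms with `τ(h)(B_{h'}) ⊆ B_{h·h'}` and `τ(h)(a·b) = a·τ(h)(b)`. Then for all `h`:
(i) `B_h = B_e · τ(h)(1)`; (ii) `a ↦ a·τ(h)(1)` is a `k`-linear isomorphism `B_e ≅ B_h`;
(iii) the span of `B_h·B_{h'}` is `B_{h·h'}` (`B` is `k[H]`-Galois over `B_e`). In
particular all graded components of `B` are isomorphic as `B_e`-modules. -/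
theorem homogeneous_algebra_is_galois {H : Type*} [CommGroup H] {k : Type*} [Field k]
    {B : Type*} [Ring B] [Algebra k B]
    (grading : H → Submodule k B)
    (one_mem : (1 : B) ∈ grading 1)
    (mul_mem : ∀ (h h' : H), ∀ a ∈ grading h, ∀ b ∈ grading h', a * b ∈ grading (h * h'))
    (τ : H →* (B ≃ₗ[k] B))
    (τ_grading : ∀ (h h' : H), ∀ b ∈ grading h', τ h b ∈ grading (h * h'))
    (τ_equivariant : ∀ (h : H) (a b : B), τ h (a * b) = a * τ h b) :
    ∀ h : H,
      -- (i) `B_h = B_e · τ(h)(1)`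
      ((fun a => a * τ h (1 : B)) '' (grading (1 : H) : Set B) = (grading h : Set B)) ∧
      -- (ii) `a ↦ a · τ(h)(1)` is injective on `B_e` (hence a `k`-linear isomorphism)
      Set.InjOn (fun a => a * τ h (1 : B)) (grading (1 : H) : Set B) ∧
      -- (iii) the span of `B_h · B_{h'}` equals `B_{h·h'}`
      (∀ h' : H,
        Submodule.span k {x : B | ∃ a ∈ grading h, ∃ b ∈ grading h', x = a * b}
          = grading (h * h')) := by
  intro h
  have key : ∀ (g : H) (b : B), τ g b = b * τ g 1 := by
    intro g b
    have := τ_equivariant g b 1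
    rwa [mul_one] at this
  have inv_key : ∀ (g : H) (b : B), τ g (τ g⁻¹ b) = b := by
    intro g b
    have h2 : τ g (τ g⁻¹ b) = τ (g * g⁻¹) b := by rw [map_mul]; rfl
    rw [h2, mul_inv_cancel, map_one]
    rfl
  have himg : (fun a => a * τ h (1 : B)) '' (grading (1 : H) : Set B) = (grading h : Set B) := by
    ext x
    constructor
    · rintro ⟨a, ha, rfl⟩
      have := τ_grading h 1 a ha
      rw [key h a] at this
      simpa using this
    · intro hx
      refine ⟨τ h⁻¹ x, ?_, ?_⟩
      · have := τ_grading h⁻¹ h x hx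
        simpa using this
      · simp only
        rw [← key h, inv_key]
  refine ⟨himg, ?_, ?_⟩
  · intro a _ b _ hab
    simp only [← key h] at hab
    exact (τ h).injective hab
  · intro h'
    apply le_antisymm
    · rw [Submodule.span_le]
      rintro x ⟨a, ha, b, hb, rfl⟩
      exact mul_mem h h' a ha b hb
    · intro x hx
      apply Submodule.subset_span
      refine ⟨τ h'⁻¹ x, ?_, τ h' 1, ?_, ?_⟩
      · have := τ_grading h'⁻¹ (h * h') x hx
        have e : h'⁻¹ * (h * h') = h := by rw [mul_comm h h', ← mul_assoc, inv_mul_cancel, one_mul]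
        rwa [e] at this
      · have := τ_grading h' 1 1 one_mem
        simpa using this
      · rw [← key h', inv_key]
end
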